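/- Let A be an n×n symmetric matrix over 𝔽₂ of rank r in leading principal non-singular (LPN) form. Then the number of n×n upper-triangular matrices B over 𝔽₂ with BᵀB = A equals |𝒞_{n−r}|, the number of (n−r)×(n−r) upper-triangular matrices U over 𝔽₂ with UᵀU = O. -/

import Mathlib

open Matrix

section Aux

lemma sq2 : ∀ x : ZMod 2, x * x = x := by decide

lemma chol : ∀ (m : ℕ) (A : Matrix (Fin m) (Fin m) (ZMod 2)), A.IsSymm →
    (∀ k (h : k ≤ m), (A.submatrix (Fin.castLE h) (Fin.castLE h)).det = 1) →
    ∃ L : Matrix (Fin m) (Fin m) (ZMod 2), L.BlockTriangular id ∧ Lᵀ * L = A := by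
  intro m
  induction m with
  | zero => intro A _ _; exact ⟨0, by simp [BlockTriangular], by ext i j; exact i.elim0⟩
  | succ m ih =>
    intro A hsymm hminor
    have hsAB : ∀ p q, A p q = A q p := by
      intro p q; exact congrFun (congrFun hsymm q) p
    set A' : Matrix (Fin m) (Fin m) (ZMod 2) :=
      A.submatrix (Fin.castLE (Nat.le_succ m)) (Fin.castLE (Nat.le_succ m)) with hA'
    have hsymm' : A'.IsSymm := by
      ext i j
      simpa [hA', Matrix.submatrix_apply] using congrFun (congrFun hsymm _) _
    have hminor' : ∀ k (h : k ≤ m), (A'.submatrix (Fin.castLE h) (Fin.castLE h)).det = 1 := by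
      intro k h
      have : A'.submatrix (Fin.castLE h) (Fin.castLE h)
          = A.submatrix (Fin.castLE (h.trans (Nat.le_succ m))) (Fin.castLE (h.trans (Nat.le_succ m))) := by
        ext i j; rfl
      rw [this]; exact hminor k _
    obtain ⟨L', hL't, hL'e⟩ := ih A' hsymm' hminor'
    have hdetL' : IsUnit L'.det := by
      apply IsUnit.of_mul_eq_one L'.det
      have h2 : A'.submatrix (Fin.castLE le_rfl) (Fin.castLE le_rfl) = A' := by
        ext i j; simp
      calc L'.det * L'.det = (L'ᵀ).det * L'.det := by rw [Matrix.det_transpose]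
        _ = (L'ᵀ * L').det := (Matrix.det_mul _ _).symm
        _ = 1 := by rw [hL'e, ← h2]; exact hminor' m le_rfl
    have hdetL'T : IsUnit (L'ᵀ).det := by rwa [Matrix.det_transpose]
    set a : Fin m → ZMod 2 := fun i => A i.castSucc (Fin.last m) with ha
    set v : Fin m → ZMod 2 := (L'ᵀ)⁻¹ *ᵥ a with hv
    have hLv : L'ᵀ *ᵥ v = a := by
      rw [hv, Matrix.mulVec_mulVec, Matrix.mul_nonsing_inv _ hdetL'T, Matrix.one_mulVec]
    set t : ZMod 2 := A (Fin.last m) (Fin.last m) - v ⬝ᵥ v with ht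
    set L : Matrix (Fin (m+1)) (Fin (m+1)) (ZMod 2) := Matrix.of (fun i j : Fin (m+1) =>
      if hi : (i:ℕ) < m then
        (if hj : (j:ℕ) < m then L' ⟨i,hi⟩ ⟨j,hj⟩ else v ⟨i,hi⟩)
      else (if (j:ℕ) < m then 0 else t)) with hL
    have e11 : ∀ i j : Fin m, L i.castSucc j.castSucc = L' i j := by
      intro i j; simp [hL, i.isLt, j.isLt]
    have e12 : ∀ i : Fin m, L i.castSucc (Fin.last m) = v i := by
      intro i; simp [hL, i.isLt]
    have e21 : ∀ j : Fin m, L (Fin.last m) j.castSucc = 0 := by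
      intro j; simp [hL, j.isLt]
    have e22 : L (Fin.last m) (Fin.last m) = t := by simp [hL]
    have hCS : ∀ i : Fin m, i.castSucc = Fin.castLE (Nat.le_succ m) i := fun i => rfl
    refine ⟨L, ?_, ?_⟩
    · intro i j hij
      simp only [id] at hij
      induction i using Fin.lastCases with
      | last =>
        induction j using Fin.lastCases with
        | last => exact absurd hij (lt_irrefl _)
        | cast j' => exact e21 j'
      | cast i' =>
        induction j using Fin.lastCases with
        | last => exact absurd ((Fin.castSucc_lt_last i').trans hij) (lt_irrefl _)
        | cast j' =>
          rw [e11]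
          exact hL't (by simpa using hij)
    · have key : ∀ i j : Fin (m+1), (Lᵀ * L) i j = (∑ k : Fin m, L k.castSucc i * L k.castSucc j)
          + L (Fin.last m) i * L (Fin.last m) j := by
        intro i j
        rw [Matrix.mul_apply, Fin.sum_univ_castSucc]; rfl
      ext i j
      induction i using Fin.lastCases with
      | last =>
        induction j using Fin.lastCases with
        | last =>
          rw [key, e22]
          simp only [e12]
          have h1 : (∑ k : Fin m, v k * v k) = v ⬝ᵥ v := rfl
          rw [h1, sq2, ht]; ring
        | cast j' =>
          rw [key, e22]
          simp only [e12, e11, e21, mul_zero, zero_mul, add_zero]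
          have h1 : (∑ k : Fin m, v k * L' k j') = (L'ᵀ *ᵥ v) j' := by
            simp [Matrix.mulVec, dotProduct, mul_comm]
          rw [h1, hLv, ha]
          exact (hsAB _ _)
      | cast i' =>
        induction j using Fin.lastCases with
        | last =>
          rw [key]
          simp only [e12, e11, e21, mul_zero, zero_mul, add_zero]
          have h1 : (∑ k : Fin m, L' k i' * v k) = (L'ᵀ *ᵥ v) i' := by
            simp [Matrix.mulVec, dotProduct, mul_comm]
          rw [h1, hLv, ha]
        | cast j' =>
          rw [key]
          simp only [e11, e21, mul_zero, zero_mul, add_zero]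
          have h1 : (∑ k : Fin m, L' k i' * L' k j') = (L'ᵀ * L') i' j' := by
            simp [Matrix.mul_apply]
          rw [h1, hL'e, hA']
          rfl

lemma uniq {m : ℕ} {L₁ L₂ : Matrix (Fin m) (Fin m) (ZMod 2)}
    (h₁ : L₁.BlockTriangular id) (h₂ : L₂.BlockTriangular id)
    (hd₁ : IsUnit L₁.det) (hd₂ : IsUnit L₂.det)
    (h : L₁ᵀ * L₁ = L₂ᵀ * L₂) : L₁ = L₂ := by
  haveI := L₁.invertibleOfIsUnitDet hd₁
  haveI := L₂.invertibleOfIsUnitDet hd₂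
  set T := L₂ * L₁⁻¹ with hT
  have hTtri : T.BlockTriangular id := h₂.mul (blockTriangular_inv_of_blockTriangular h₁)
  have h4 : Tᵀ * T = 1 := by
    calc Tᵀ * T = ((L₁⁻¹)ᵀ * (L₂ᵀ * L₂)) * L₁⁻¹ := by
          rw [hT, transpose_mul]
          simp only [Matrix.mul_assoc]
      _ = ((L₁⁻¹)ᵀ * L₁ᵀ) * (L₁ * L₁⁻¹) := by
          rw [← h]; simp only [Matrix.mul_assoc]
      _ = (L₁ * L₁⁻¹)ᵀ * (L₁ * L₁⁻¹) := by rw [transpose_mul]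
      _ = 1 := by rw [Matrix.mul_nonsing_inv _ hd₁]; simp
  have hTinv : T⁻¹ = Tᵀ := Matrix.inv_eq_left_inv h4
  have hTT : Tᵀ.BlockTriangular id := by
    rw [← hTinv, hT, Matrix.mul_inv_rev, Matrix.nonsing_inv_nonsing_inv _ hd₁]
    exact h₁.mul (blockTriangular_inv_of_blockTriangular h₂)
  have hdiag : ∀ i j : Fin m, i ≠ j → T i j = 0 := by
    intro i j hij
    rcases lt_or_gt_of_ne hij with hlt | hgt
    · exact hTT (show (id i : Fin m) < id j from hlt)
    · exact hTtri (show (id j : Fin m) < id i from hgt)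
  have hTone : T = 1 := by
    ext i j
    by_cases hij : i = j
    · subst hij
      have h5 : (Tᵀ * T) i i = T i i := by
        rw [Matrix.mul_apply]
        rw [Finset.sum_eq_single i]
        · exact (sq2 _).trans rfl
        · intro b _ hb; rw [transpose_apply, hdiag _ _ hb, zero_mul]
        · intro hb; exact absurd (Finset.mem_univ i) hb
      rw [← h5, h4]
    · rw [hdiag i j hij, Matrix.one_apply_ne hij]
  have : T * L₁ = L₂ := by
    rw [hT, Matrix.mul_assoc, Matrix.nonsing_inv_mul _ hd₁, Matrix.mul_one]
  rw [← this, hTone, Matrix.one_mul]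

lemma schur_zero {K : Type*} [Field K] {p q : ℕ}
    (S : Matrix (Fin q) (Fin q) K)
    (h : Matrix.rank (fromBlocks (1 : Matrix (Fin p) (Fin p) K) 0 0 S) = p) :
    S = 0 := by
  set D := fromBlocks (1 : Matrix (Fin p) (Fin p) K) 0 0 S with hD
  ext i j
  by_contra hij
  rw [Matrix.zero_apply] at hij
  -- the family
  set v : Fin p ⊕ Fin q → K := fun x => D x (Sum.inr j) with hv
  set w : Fin p ⊕ Fin 1 → (Fin p ⊕ Fin q → K) :=
    Sum.elim (fun a => Pi.single (Sum.inl a) 1) (fun _ => v) with hw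
  have hvinl : ∀ a, v (Sum.inl a) = 0 := fun a => rfl
  have hvinr : ∀ b, v (Sum.inr b) = S b j := fun b => rfl
  have hmem : ∀ x, w x ∈ LinearMap.range D.mulVecLin := by
    rintro (a | b)
    · refine ⟨Pi.single (Sum.inl a) 1, ?_⟩
      rw [Matrix.mulVecLin_apply, Matrix.mulVec_single_one]
      ext (c | c)
      · simp [hw, hD, Matrix.transpose_apply, fromBlocks, Matrix.one_apply, Pi.single_apply,
          eq_comm]
      · simp [hw, hD, fromBlocks, Pi.single_apply]
    · refine ⟨Pi.single (Sum.inr j) 1, ?_⟩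
      rw [Matrix.mulVecLin_apply, Matrix.mulVec_single_one]
      ext x
      simp [hw, hv, Matrix.transpose_apply]
  have hli : LinearIndependent K w := by
    rw [Fintype.linearIndependent_iff]
    intro g hg
    have hg' : ∀ x, (∑ y, g y • w y) x = 0 := fun x => by rw [hg]; rfl
    have hinr : g (Sum.inr 0) = 0 := by
      have := hg' (Sum.inr i)
      rw [Finset.sum_apply] at this
      rw [Fintype.sum_sum_type] at this
      simp only [hw, Sum.elim_inl, Sum.elim_inr, Pi.smul_apply, Pi.single_apply] at this
      simp only [smul_eq_mul, mul_ite, mul_one, mul_zero] at this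
      rw [Finset.sum_eq_zero (by intro a _; simp)] at this
      simp only [Finset.univ_unique, Finset.sum_singleton, zero_add, hvinr] at this
      exact (mul_eq_zero.mp this).resolve_right hij
    rintro (a | b)
    · have := hg' (Sum.inl a)
      rw [Finset.sum_apply, Fintype.sum_sum_type] at this
      simp only [hw, Sum.elim_inl, Sum.elim_inr, Pi.smul_apply, Pi.single_apply, smul_eq_mul,
        mul_ite, mul_one, mul_zero, hvinl] at this
      simp only [Sum.inl.injEq] at this
      rw [Finset.sum_ite_eq] at this
      simpa using this
    · have : b = 0 := Subsingleton.elim _ _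
      rw [this]; exact hinr
  have hle : Submodule.span K (Set.range w) ≤ LinearMap.range D.mulVecLin := by
    rw [Submodule.span_le]
    rintro x ⟨y, rfl⟩
    exact hmem y
  have h1 : (p + 1 : ℕ) ≤ Matrix.rank D := by
    have := Submodule.finrank_mono hle
    rwa [finrank_span_eq_card hli, Fintype.card_sum, Fintype.card_fin, Fintype.card_fin] at this
  omega

end Aux

theorem stmt_13 (n r : ℕ) (A : Matrix (Fin n) (Fin n) (ZMod 2)) (hA : A.IsSymm)
    (hrank : A.rank = r)
    (hLPN : ∀ k : ℕ, ∀ h : k ≤ n, 1 ≤ k →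
      (A.submatrix (Fin.castLE h) (Fin.castLE h)).det = if k ≤ r then 1 else 0) :
    Nat.card {B : Matrix (Fin n) (Fin n) (ZMod 2) // B.BlockTriangular id ∧ Bᵀ * B = A} =
    Nat.card {U : Matrix (Fin (n - r)) (Fin (n - r)) (ZMod 2) //
      U.BlockTriangular id ∧ Uᵀ * U = 0} := by
  classical
  have hr : r ≤ n := by
    have h1 := A.rank_le_card_width
    rw [hrank, Fintype.card_fin] at h1; exact h1
  have h_add : r + (n - r) = n := by omega
  set E : Fin r ⊕ Fin (n - r) ≃ Fin n := finSumFinEquiv.trans (finCongr h_add) with hE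
  set f1 : Fin r → Fin n := fun i => E (Sum.inl i) with hf1d
  set f2 : Fin (n - r) → Fin n := fun j => E (Sum.inr j) with hf2d
  have hf1 : ∀ i : Fin r, (f1 i : ℕ) = (i : ℕ) := by intro i; simp [hf1d, hE]
  have hf2 : ∀ j : Fin (n - r), (f2 j : ℕ) = r + (j : ℕ) := by intro j; simp [hf2d, hE]
  -- block decomposition of any matrix
  have hblocks : ∀ X : Matrix (Fin n) (Fin n) (ZMod 2), X.submatrix E E =
      fromBlocks (X.submatrix f1 f1) (X.submatrix f1 f2)
        (X.submatrix f2 f1) (X.submatrix f2 f2) := by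
    intro X; ext (i | i) (j | j) <;> rfl
  -- transfer of the quadratic equation
  have htrans : ∀ X Y : Matrix (Fin n) (Fin n) (ZMod 2),
      (Xᵀ * X = Y) ↔ (X.submatrix E E)ᵀ * (X.submatrix E E) = Y.submatrix E E := by
    intro X Y
    rw [transpose_submatrix, submatrix_mul_equiv]
    constructor
    · intro h; rw [h]
    · intro h
      have h2 := congrArg (fun Z => Z.submatrix E.symm E.symm) h
      simpa [submatrix_submatrix, Equiv.self_comp_symm, submatrix_id_id] using h2
  -- transfer of triangularity
  have htri : ∀ X : Matrix (Fin n) (Fin n) (ZMod 2), X.BlockTriangular id ↔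
      ((X.submatrix f1 f1).BlockTriangular id ∧ (X.submatrix f2 f2).BlockTriangular id ∧
        X.submatrix f2 f1 = 0) := by
    intro X
    constructor
    · intro hX
      refine ⟨?_, ?_, ?_⟩
      · intro i j hij
        exact hX (show (id (f1 j) : Fin n) < id (f1 i) by
          simp only [id]; rw [Fin.lt_def, hf1, hf1]; exact hij)
      · intro i j hij
        refine hX (show (id (f2 j) : Fin n) < id (f2 i) by
          simp only [id]; rw [Fin.lt_def, hf2, hf2]
          have : (j : ℕ) < (i : ℕ) := hij
          omega)
      · ext i j
        refine hX (show (id (f1 j) : Fin n) < id (f2 i) by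
          simp only [id]; rw [Fin.lt_def, hf1, hf2]; omega)
    · rintro ⟨h11, h22, h21⟩ i j hij
      simp only [id] at hij
      obtain ⟨x, rfl⟩ := E.surjective i
      obtain ⟨y, rfl⟩ := E.surjective j
      rcases x with a | a <;> rcases y with b | b
      · refine h11 (show (id b : Fin r) < id a by
          simp only [id]; rw [Fin.lt_def]
          have := hij; rw [Fin.lt_def] at this
          rw [show E (Sum.inl b) = f1 b from rfl, show E (Sum.inl a) = f1 a from rfl,
            hf1, hf1] at this
          exact this)
      · -- j = f2 b < i = f1 a : impossible
        exfalso
        rw [Fin.lt_def] at hij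
        rw [show E (Sum.inr b) = f2 b from rfl, show E (Sum.inl a) = f1 a from rfl,
          hf2, hf1] at hij
        have := a.isLt
        omega
      · exact congrFun (congrFun h21 a) b
      · refine h22 (show (id b : Fin (n - r)) < id a by
          simp only [id]; rw [Fin.lt_def]
          rw [Fin.lt_def] at hij
          rw [show E (Sum.inr b) = f2 b from rfl, show E (Sum.inr a) = f2 a from rfl,
            hf2, hf2] at hij
          omega)
  have hsAB : ∀ p q, A p q = A q p := fun p q => congrFun (congrFun hA q) p
  -- the leading principal r×r block
  set A11 := A.submatrix f1 f1 with hA11d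
  set A12 := A.submatrix f1 f2 with hA12d
  set A21 := A.submatrix f2 f1 with hA21d
  set A22 := A.submatrix f2 f2 with hA22d
  have hf1c : f1 = Fin.castLE hr := by
    funext i; apply Fin.ext; rw [hf1]; rfl
  have hA11symm : A11.IsSymm := by
    ext i j; exact hsAB _ _
  have hA11minor : ∀ k (h : k ≤ r), (A11.submatrix (Fin.castLE h) (Fin.castLE h)).det = 1 := by
    intro k h
    have heq : A11.submatrix (Fin.castLE h) (Fin.castLE h)
        = A.submatrix (Fin.castLE (h.trans hr)) (Fin.castLE (h.trans hr)) := by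
      rw [hA11d, hf1c]; ext i j; rfl
    rw [heq]
    rcases Nat.eq_zero_or_pos k with h0 | h0
    · subst h0; exact Matrix.det_isEmpty
    · rw [hLPN k (h.trans hr) h0, if_pos (h.trans le_rfl)]
  obtain ⟨L, hLtri, hLe⟩ := chol r A11 hA11symm hA11minor
  have hdetA11 : A11.det = 1 := by
    have := hA11minor r le_rfl
    have h2 : A11.submatrix (Fin.castLE le_rfl) (Fin.castLE le_rfl) = A11 := by
      ext i j; simp
    rwa [h2] at this
  have hdetL : IsUnit L.det := by
    apply IsUnit.of_mul_eq_one L.det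
    calc L.det * L.det = (Lᵀ).det * L.det := by rw [Matrix.det_transpose]
      _ = (Lᵀ * L).det := (Matrix.det_mul _ _).symm
      _ = 1 := by rw [hLe, hdetA11]
  have hdetLT : IsUnit (Lᵀ).det := by rwa [Matrix.det_transpose]
  set M := (Lᵀ)⁻¹ * A12 with hM
  have hLM : Lᵀ * M = A12 := by
    rw [hM, ← Matrix.mul_assoc, Matrix.mul_nonsing_inv _ hdetLT, Matrix.one_mul]
  have hA21T : A21 = A12ᵀ := by
    ext i j; exact hsAB _ _
  -- Schur complement is zero
  haveI : Invertible A11 := A11.invertibleOfIsUnitDet (by rw [hdetA11]; exact isUnit_one)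
  have hdetInv : IsUnit (⅟A11).det := IsUnit.of_mul_eq_one A11.det
    (by rw [← Matrix.det_mul, invOf_mul_self, Matrix.det_one])
  have hA22M : A22 = Mᵀ * M := by
    have hrA' : (A.submatrix (⇑E) (⇑E)).rank = r := by
      rw [Matrix.rank_submatrix]; exact hrank
    rw [hblocks A] at hrA'
    rw [← hA11d, ← hA12d, ← hA21d, ← hA22d] at hrA'
    rw [fromBlocks_eq_of_invertible₁₁ A11 A12 A21 A22] at hrA'
    rw [Matrix.rank_mul_eq_left_of_isUnit_det _ _ (by
      rw [Matrix.det_fromBlocks_zero₂₁, Matrix.det_one, Matrix.det_one, one_mul]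
      exact isUnit_one)] at hrA'
    rw [Matrix.rank_mul_eq_right_of_isUnit_det _ _ (by
      rw [Matrix.det_fromBlocks_zero₁₂, Matrix.det_one, Matrix.det_one, one_mul]
      exact isUnit_one)] at hrA'
    set S := A22 - A21 * ⅟A11 * A12 with hS
    have hnorm : fromBlocks (⅟A11) 0 0 (1 : Matrix (Fin (n - r)) (Fin (n - r)) (ZMod 2)) *
        fromBlocks A11 0 0 S = fromBlocks 1 0 0 S := by
      rw [Matrix.fromBlocks_multiply]
      simp [invOf_mul_self]
    have hrank2 : (fromBlocks (1 : Matrix (Fin r) (Fin r) (ZMod 2)) 0 0 S).rank = r := by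
      rw [← hnorm, Matrix.rank_mul_eq_right_of_isUnit_det _ _ (by
        rw [Matrix.det_fromBlocks_zero₂₁, Matrix.det_one, mul_one]; exact hdetInv)]
      exact hrA'
    have hS0 : S = 0 := schur_zero S hrank2
    have hA22eq : A22 = A21 * ⅟A11 * A12 := by
      rw [hS] at hS0; rwa [sub_eq_zero] at hS0
    calc A22 = A21 * ⅟A11 * A12 := hA22eq
      _ = A12ᵀ * (L⁻¹ * (Lᵀ)⁻¹) * A12 := by
          rw [hA21T, invOf_eq_nonsing_inv, ← hLe, Matrix.mul_inv_rev]
      _ = Mᵀ * M := by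
          rw [hM, transpose_mul, Matrix.transpose_nonsing_inv, transpose_transpose]
          simp only [Matrix.mul_assoc]
  -- characterization of solutions
  have hchar : ∀ B : Matrix (Fin n) (Fin n) (ZMod 2), (B.BlockTriangular id ∧ Bᵀ * B = A) ↔
      (B.submatrix f1 f1 = L ∧ B.submatrix f1 f2 = M ∧ B.submatrix f2 f1 = 0 ∧
       (B.submatrix f2 f2).BlockTriangular id ∧
       (B.submatrix f2 f2)ᵀ * (B.submatrix f2 f2) = 0) := by
    intro B
    constructor
    · rintro ⟨hBt, hBe⟩
      obtain ⟨h11, h22, h21⟩ := (htri B).mp hBt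
      rw [htrans] at hBe
      rw [hblocks B, hblocks A, ← hA11d, ← hA12d, ← hA21d, ← hA22d] at hBe
      rw [fromBlocks_transpose, fromBlocks_multiply] at hBe
      simp only [h21, transpose_zero, Matrix.zero_mul, Matrix.mul_zero, add_zero,
        zero_add] at hBe
      have e11 := congrArg Matrix.toBlocks₁₁ hBe
      have e12 := congrArg Matrix.toBlocks₁₂ hBe
      have e22 := congrArg Matrix.toBlocks₂₂ hBe
      simp only [Matrix.toBlocks_fromBlocks₁₁, Matrix.toBlocks_fromBlocks₁₂,
        Matrix.toBlocks_fromBlocks₂₂] at e11 e12 e22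
      have hdetB11 : IsUnit (B.submatrix f1 f1).det := by
        apply IsUnit.of_mul_eq_one (B.submatrix f1 f1).det
        calc (B.submatrix f1 f1).det * (B.submatrix f1 f1).det
            = ((B.submatrix f1 f1)ᵀ).det * (B.submatrix f1 f1).det := by
              rw [Matrix.det_transpose]
          _ = ((B.submatrix f1 f1)ᵀ * (B.submatrix f1 f1)).det := (Matrix.det_mul _ _).symm
          _ = 1 := by rw [e11, hdetA11]
      have hB11 : B.submatrix f1 f1 = L := uniq h11 hLtri hdetB11 hdetL (e11.trans hLe.symm)
      have hB12 : B.submatrix f1 f2 = M := by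
        have h3 : Lᵀ * (B.submatrix f1 f2) = Lᵀ * M := by
          rw [hLM, ← e12, hB11]
        calc B.submatrix f1 f2
            = (Lᵀ)⁻¹ * (Lᵀ * (B.submatrix f1 f2)) := by
              rw [← Matrix.mul_assoc, Matrix.nonsing_inv_mul _ hdetLT, Matrix.one_mul]
          _ = (Lᵀ)⁻¹ * (Lᵀ * M) := by rw [h3]
          _ = M := by rw [← Matrix.mul_assoc, Matrix.nonsing_inv_mul _ hdetLT, Matrix.one_mul]
      refine ⟨hB11, hB12, h21, h22, ?_⟩
      rw [hB12, hA22M] at e22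
      exact add_eq_left.mp e22
    · rintro ⟨h1, h2, h3, h4, h5⟩
      constructor
      · rw [htri]; exact ⟨h1 ▸ hLtri, h4, h3⟩
      · rw [htrans, hblocks B, hblocks A, ← hA11d, ← hA12d, ← hA21d, ← hA22d,
          h1, h2, h3, fromBlocks_transpose, fromBlocks_multiply]
        simp only [transpose_zero, Matrix.zero_mul, Matrix.mul_zero, add_zero, zero_add, h5]
        have h21' : Mᵀ * L = A21 := by
          rw [hA21T, ← hLM, transpose_mul (Lᵀ) M, transpose_transpose]
        rw [hLe, hLM, h21', ← hA22M]
  -- the bijection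
  apply Nat.card_eq_of_bijective
    (fun B => (⟨B.1.submatrix f2 f2, ((hchar B.1).mp B.2).2.2.2.1,
      ((hchar B.1).mp B.2).2.2.2.2⟩ :
      {U : Matrix (Fin (n - r)) (Fin (n - r)) (ZMod 2) //
        U.BlockTriangular id ∧ Uᵀ * U = 0}))
  constructor
  · rintro ⟨B, hB⟩ ⟨B', hB'⟩ h
    simp only [Subtype.mk.injEq] at h ⊢
    obtain ⟨a1, a2, a3, a4, a5⟩ := (hchar B).mp hB
    obtain ⟨b1, b2, b3, b4, b5⟩ := (hchar B').mp hB'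
    have hEE : B.submatrix E E = B'.submatrix E E := by
      rw [hblocks B, hblocks B', a1, a2, a3, b1, b2, b3, h]
    have h6 := congrArg (fun Z => Z.submatrix E.symm E.symm) hEE
    simpa [Matrix.submatrix_submatrix, Equiv.self_comp_symm, Matrix.submatrix_id_id] using h6
  · rintro ⟨U, hUt, hUe⟩
    have hb1 : ((fromBlocks L M 0 U).submatrix E.symm E.symm).submatrix f1 f1 = L := by
      ext i j
      simp [hf1d, Matrix.submatrix_apply, Equiv.symm_apply_apply]
    have hb2 : ((fromBlocks L M 0 U).submatrix E.symm E.symm).submatrix f1 f2 = M := by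
      ext i j
      simp [hf1d, hf2d, Matrix.submatrix_apply, Equiv.symm_apply_apply]
    have hb3 : ((fromBlocks L M 0 U).submatrix E.symm E.symm).submatrix f2 f1 = 0 := by
      ext i j
      simp [hf1d, hf2d, Matrix.submatrix_apply, Equiv.symm_apply_apply]
    have hb4 : ((fromBlocks L M 0 U).submatrix E.symm E.symm).submatrix f2 f2 = U := by
      ext i j
      simp [hf2d, Matrix.submatrix_apply, Equiv.symm_apply_apply]
    refine ⟨⟨(fromBlocks L M 0 U).submatrix E.symm E.symm, ?_⟩, ?_⟩
    · rw [hchar]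
      exact ⟨hb1, hb2, hb3, by rw [hb4]; exact hUt, by rw [hb4]; exact hUe⟩
    · exact Subtype.ext hb4
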